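/- Let (Q,𝔫) be a regular local ring of dimension c ≥ 2 with algebraically closed residue field k = Q/𝔫. Let f₁,…,f_{c-1}, g be a Q-regular sequence with f_i ∈ 𝔫² for all i and g ∈ 𝔫. Set A = Q/(f₁,…,f_{c-1}, g^r) with r ≥ 2, and set H = Q/(f₁,…,f_{c-1}, g), regarded as an A-module. Then there exists an integer m ≥ 2 (depending only on A) such that m divides ℓ(M) for every finitely generated A-module M satisfying Tor_i^A(H, M) = 0 for all i ≥ 1. -/

import Mathlib

open CategoryTheory

open Pointwise in
/-- The length of a module: the Krull dimension of its lattice of submodules. -/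
noncomputable def moduleLength (R M : Type*) [Ring R] [AddCommGroup M] [Module R M] : ℕ∞ :=
  WithBot.unbotD 0 (Order.krullDim (Submodule R M))

open Pointwise

section Length
variable {R M M' : Type*} [Ring R] [AddCommGroup M] [Module R M]
  [AddCommGroup M'] [Module R M']

lemma moduleLength_eq_iSup :
    moduleLength R M = ⨆ p : LTSeries (Submodule R M), (p.length : ℕ∞) := by
  rw [moduleLength, Order.krullDim_eq_iSup_length, WithBot.unbotD_coe]

lemma length_le_moduleLength (p : LTSeries (Submodule R M)) :
    (p.length : ℕ∞) ≤ moduleLength R M := by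
  rw [moduleLength_eq_iSup]; exact le_iSup (fun p : LTSeries (Submodule R M) => (p.length : ℕ∞)) p

lemma height_le_moduleLength (a : Submodule R M) :
    Order.height a ≤ moduleLength R M := by
  rw [Order.height, moduleLength_eq_iSup]
  exact iSup₂_le fun p _ => le_iSup (fun p : LTSeries (Submodule R M) => (p.length : ℕ∞)) p

lemma height_add_one_le {α : Type*} [Preorder α] {x y : α} (h : x < y) :
    Order.height x + 1 ≤ Order.height y := by
  rw [Order.height_eq_iSup_lt_height y]
  exact le_iSup₂_of_le x h le_rfl

lemma moduleLength_congr (e : M ≃ₗ[R] M') : moduleLength R M = moduleLength R M' := by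
  unfold moduleLength
  rw [Order.krullDim_eq_of_orderIso (Submodule.orderIsoMapComap e)]

lemma moduleLength_eq_zero_of_subsingleton [Subsingleton M] : moduleLength R M = 0 := by
  have : Unique (Submodule R M) := ⟨⟨⊥⟩, fun a => Subsingleton.elim _ _⟩
  rw [moduleLength, Order.krullDim_eq_zero_of_unique]
  rfl

lemma moduleLength_additive (N : Submodule R M) :
    moduleLength R M = moduleLength R N + moduleLength R (M ⧸ N) := by
  refine le_antisymm ?_ ?_
  · rw [moduleLength_eq_iSup (M := M)]
    refine iSup_le fun p => ?_
    have key : ∀ i : Fin (p.length + 1), (i.1 : ℕ∞) ≤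
        Order.height (Submodule.comap N.subtype (p i)) +
        Order.height (Submodule.map N.mkQ (p i)) := by
      intro i
      induction i using Fin.induction with
      | zero => simp
      | succ i ih =>
        have hp : p i.castSucc < p i.succ := p.step i
        have hA : Submodule.comap N.subtype (p i.castSucc) ≤
            Submodule.comap N.subtype (p i.succ) := Submodule.comap_mono hp.le
        have hB : Submodule.map N.mkQ (p i.castSucc) ≤
            Submodule.map N.mkQ (p i.succ) := Submodule.map_mono hp.le
        have hor : Submodule.comap N.subtype (p i.castSucc) <
            Submodule.comap N.subtype (p i.succ) ∨
            Submodule.map N.mkQ (p i.castSucc) < Submodule.map N.mkQ (p i.succ) := by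
          by_contra hcon
          push_neg at hcon
          obtain ⟨h1, h2⟩ := hcon
          have e1 : Submodule.comap N.subtype (p i.castSucc) =
              Submodule.comap N.subtype (p i.succ) := hA.lt_or_eq.resolve_left h1
          have e2 : Submodule.map N.mkQ (p i.castSucc) =
              Submodule.map N.mkQ (p i.succ) := hB.lt_or_eq.resolve_left h2
          refine absurd (le_antisymm ?_ hp.le) hp.ne'
          intro z hz
          have : N.mkQ z ∈ Submodule.map N.mkQ (p i.castSucc) := by
            rw [e2]; exact ⟨z, hz, rfl⟩
          obtain ⟨y, hy, hyz⟩ := this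
          have hzy : z - y ∈ N := by
            rw [← Submodule.Quotient.mk_eq_zero]
            have : N.mkQ (z - y) = 0 := by
              rw [map_sub, hyz, sub_self]
            exact this
          have hzyin : z - y ∈ p i.succ := sub_mem hz (hp.le hy)
          have : (⟨z - y, hzy⟩ : N) ∈ Submodule.comap N.subtype (p i.castSucc) := by
            rw [e1]; exact hzyin
          have : z - y ∈ p i.castSucc := this
          simpa using add_mem this hy
        push_cast
        rcases hor with h | h
        · calc (i.1 : ℕ∞) + 1 ≤ (Order.height (Submodule.comap N.subtype (p i.castSucc)) +
              Order.height (Submodule.map N.mkQ (p i.castSucc))) + 1 := by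
                exact add_le_add_left ih 1
          _ = (Order.height (Submodule.comap N.subtype (p i.castSucc)) + 1) +
              Order.height (Submodule.map N.mkQ (p i.castSucc)) := by ring
          _ ≤ _ := add_le_add (height_add_one_le h) (Order.height_mono hB)
        · calc (i.1 : ℕ∞) + 1 ≤ (Order.height (Submodule.comap N.subtype (p i.castSucc)) +
              Order.height (Submodule.map N.mkQ (p i.castSucc))) + 1 := by
                exact add_le_add_left ih 1
          _ = Order.height (Submodule.comap N.subtype (p i.castSucc)) +
              (Order.height (Submodule.map N.mkQ (p i.castSucc)) + 1) := by ring
          _ ≤ _ := add_le_add (Order.height_mono hA) (height_add_one_le h)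
    calc (p.length : ℕ∞) = ((Fin.last p.length).1 : ℕ∞) := by simp
      _ ≤ _ := key (Fin.last p.length)
      _ ≤ moduleLength R N + moduleLength R (M ⧸ N) :=
          add_le_add (height_le_moduleLength _) (height_le_moduleLength _)
  · rw [moduleLength_eq_iSup (M := N), moduleLength_eq_iSup (M := M ⧸ N), ENat.iSup_add]
    refine iSup_le fun p => ?_
    rw [ENat.add_iSup]
    refine iSup_le fun s => ?_
    have hmapstrict : StrictMono (Submodule.map N.subtype) :=
      fun a b h => Submodule.map_strictMono_of_injective N.injective_subtype h
    have hcomapstrict : StrictMono (Submodule.comap N.mkQ) :=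
      (Submodule.comapMkQOrderEmbedding N).strictMono
    set pM := p.map (Submodule.map N.subtype) hmapstrict with hpM
    set sM := s.map (Submodule.comap N.mkQ) hcomapstrict with hsM
    have hconn : pM.last ≤ sM.head := by
      have h1 : pM.last ≤ N := by
        rw [hpM]; rw [LTSeries.last_map]
        exact Submodule.map_subtype_le N _
      have h2 : N ≤ sM.head := by
        rw [hsM]; rw [LTSeries.head_map]
        intro z hz
        simp only [Submodule.mem_comap]
        have : N.mkQ z = 0 := (Submodule.Quotient.mk_eq_zero N).mpr hz
        rw [this]; exact zero_mem _
      exact h1.trans h2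
    rcases eq_or_lt_of_le hconn with heq | hlt
    · have := length_le_moduleLength (R := R) (M := M) (RelSeries.smash pM sM heq)
      simp only [RelSeries.smash] at this
      exact_mod_cast this
    · have := length_le_moduleLength (R := R) (M := M) (RelSeries.append pM sM hlt)
      have hlen : (RelSeries.append pM sM hlt).length = pM.length + sM.length + 1 := rfl
      rw [hlen] at this
      refine le_trans ?_ this
      push_cast
      have : (p.length : ℕ∞) + s.length ≤ p.length + s.length + 1 := le_self_add
      simpa [hpM, hsM] using this

end Length

section Filtration
variable {A M : Type*} [CommRing A] [AddCommGroup M] [Module A M]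

lemma pow_smul_ker (x : A) (r : ℕ)
    (hker : ∀ m : M, x • m = 0 → ∃ m', m = x ^ (r - 1) • m') :
    ∀ j k : ℕ, j + k = r → 1 ≤ j → ∀ n : M, x ^ j • n = 0 → ∃ u : M, n = x ^ k • u := by
  intro j
  induction j with
  | zero => intro k h h1; omega
  | succ j ih =>
    intro k hjk _ n hn
    rcases Nat.eq_zero_or_pos j with hj0 | hj1
    · subst hj0
      have hk : k = r - 1 := by omega
      subst hk
      exact hker n (by simpa using hn)
    · have hxn : x ^ j • (x • n) = 0 := by
        rw [smul_smul, ← pow_succ]; exact hn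
      obtain ⟨u, hu⟩ := ih (k + 1) (by omega) hj1 (x • n) hxn
      have h0 : x • (n - x ^ k • u) = 0 := by
        rw [smul_sub, smul_smul, ← pow_succ', ← hu, sub_self]
      obtain ⟨w, hw⟩ := hker _ h0
      refine ⟨u + x ^ j • w, ?_⟩
      have hr1 : r - 1 = k + j := by omega
      have h2 : n = x ^ (k + j) • w + x ^ k • u := by
        have h3 := sub_eq_iff_eq_add.mp hw
        rwa [hr1] at h3
      rw [h2, smul_add, smul_smul, ← pow_add]
      abel

lemma moduleLength_of_pow_filtration (x : A) (r : ℕ) (hr : 1 ≤ r)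
    (hnil : ∀ m : M, x ^ r • m = 0)
    (hker : ∀ m : M, x • m = 0 → ∃ m', m = x ^ (r - 1) • m') :
    moduleLength A M =
      (r : ℕ∞) * moduleLength A (M ⧸ LinearMap.range (LinearMap.lsmul A M x)) := by
  set T : ℕ → Submodule A M := fun j => LinearMap.range (LinearMap.lsmul A M (x ^ j)) with hT
  have hT1 : T 1 = LinearMap.range (LinearMap.lsmul A M x) := by
    simp [hT]
  set L : ℕ∞ := moduleLength A (M ⧸ LinearMap.range (LinearMap.lsmul A M x)) with hL
  have key : ∀ j : ℕ, j ≤ r → moduleLength A (M ⧸ T j) = (j : ℕ∞) * L := by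
    intro j
    induction j with
    | zero =>
      intro _
      have hTtop : T 0 = ⊤ := by
        rw [hT]
        refine Submodule.eq_top_iff'.mpr fun m => ⟨m, by simp⟩
      have : Subsingleton (M ⧸ T 0) := by
        rw [hTtop]
        exact Submodule.Quotient.subsingleton_iff.mpr rfl
      rw [moduleLength_eq_zero_of_subsingleton]
      simp
    | succ j ih =>
      intro hjr
      rcases Nat.eq_zero_or_pos j with hj0 | hj1
      · subst hj0
        rw [hT1]
        simp [hL]
      · have ihv := ih (by omega)
        set ψ : M →ₗ[A] M ⧸ T (j + 1) :=
          (T (j + 1)).mkQ.comp (LinearMap.lsmul A M (x ^ j)) with hψ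
        have hrange : LinearMap.range ψ = Submodule.map (T (j + 1)).mkQ (T j) := by
          rw [hψ, LinearMap.range_comp]
        have hkerψ : LinearMap.ker ψ = T 1 := by
          ext m
          simp only [hψ, hT, LinearMap.mem_ker, LinearMap.comp_apply, LinearMap.lsmul_apply,
            Submodule.mkQ_apply, Submodule.Quotient.mk_eq_zero, LinearMap.mem_range]
          constructor
          · rintro ⟨u, hu⟩
            have h0 : x ^ j • (m - x • u) = 0 := by
              rw [smul_sub, smul_smul, ← pow_succ, hu, sub_self]
            obtain ⟨w, hw⟩ := pow_smul_ker x r hker j (r - j) (by omega) hj1 _ h0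
            refine ⟨u + x ^ (r - j - 1) • w, ?_⟩
            have hx1 : x • (x ^ (r - j - 1) • w) = x ^ (r - j) • w := by
              rw [smul_smul, ← pow_succ']
              have he : r - j - 1 + 1 = r - j := by omega
              rw [he]
            rw [pow_one, smul_add, hx1, ← hw]
            abel
          · rintro ⟨u, hu⟩
            rw [pow_one] at hu
            exact ⟨u, by rw [← hu, smul_smul, ← pow_succ]⟩
        have hTle : T (j + 1) ≤ T j := by
          rintro _ ⟨u, rfl⟩
          exact ⟨x • u, by simp [smul_smul, ← pow_succ']⟩
        have hadd := moduleLength_additive (R := A) (M := M ⧸ T (j + 1))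
          (Submodule.map (T (j + 1)).mkQ (T j))
        have e1 : moduleLength A ((M ⧸ T (j+1)) ⧸ (Submodule.map (T (j + 1)).mkQ (T j))) =
            moduleLength A (M ⧸ T j) :=
          moduleLength_congr (Submodule.quotientQuotientEquivQuotient (T (j+1)) (T j) hTle)
        have e2 : moduleLength A (Submodule.map (T (j + 1)).mkQ (T j)) = L := by
          rw [← hrange]
          have := moduleLength_congr (LinearMap.quotKerEquivRange ψ)
          rw [← this, hkerψ, hT1, hL]
        rw [hadd, e1, e2, ihv]
        push_cast
        ring
  have hTr : T r = ⊥ := by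
    rw [hT]
    refine LinearMap.range_eq_bot.mpr ?_
    ext m
    simpa using hnil m
  have := key r le_rfl
  rw [hTr] at this
  rw [← moduleLength_congr (Submodule.quotEquivOfEqBot (⊥ : Submodule A M) rfl), this]

end Filtration

section Proj
variable {A P : Type*} [CommRing A] [AddCommGroup P] [Module A P]

lemma ker_smul_of_projective [Module.Projective A P] (x y : A)
    (hxy : ∀ a : A, x * a = 0 → ∃ b : A, a = y * b) (p : P) (hp : x • p = 0) :
    ∃ p' : P, p = y • p' := by
  obtain ⟨s, hs⟩ := Module.projective_def'.mp ‹Module.Projective A P›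
  have hsp : x • s p = 0 := by rw [← map_smul, hp, map_zero]
  have hcoeff : ∀ i : P, x * (s p) i = 0 := by
    intro i
    have := congrArg (fun v : P →₀ A => v i) hsp
    simpa using this
  classical
  set c : P → A := fun i => if h : (s p) i = 0 then 0 else Classical.choose (hxy _ (hcoeff i))
    with hc
  have hcspec : ∀ i : P, (s p) i = y * c i := by
    intro i
    by_cases h : (s p) i = 0
    · simp [hc, h]
    · simp only [hc, dif_neg h]
      exact Classical.choose_spec (hxy _ (hcoeff i))
  set t : P →₀ A := Finsupp.onFinset (s p).support c (by
    intro i hi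
    rw [Finsupp.mem_support_iff]
    intro h0
    apply hi
    simp only [hc]
    rw [dif_pos h0]) with ht
  have hyt : y • t = s p := by
    ext i
    simp only [Finsupp.smul_apply, smul_eq_mul, ht, Finsupp.onFinset_apply]
    exact (hcspec i).symm
  refine ⟨Finsupp.linearCombination A (id : P → P) t, ?_⟩
  have h2 : Finsupp.linearCombination A (id : P → P) (s p) = p := by
    have h3 := DFunLike.congr_fun hs p
    simpa using h3
  calc p = Finsupp.linearCombination A (id : P → P) (s p) := h2.symm
    _ = Finsupp.linearCombination A (id : P → P) (y • t) := by rw [hyt]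
    _ = y • Finsupp.linearCombination A (id : P → P) t := map_smul _ _ _
end Proj

section TorExtract

variable {A : Type} [CommRing A] (x : A) (y : A)

lemma tor_one_vanishing (M : Type) [AddCommGroup M] [Module A M]
    (hxy : ∀ a : A, x * a = 0 → ∃ b : A, a = y * b)
    (hsub : Subsingleton
      (((Tor (ModuleCat A) 1).obj (ModuleCat.of A (A ⧸ Ideal.span {x}))).obj (ModuleCat.of A M)))
    (m : M) (hm : x • m = 0) : ∃ m' : M, m = y • m' := by
  classical
  set X : ModuleCat A := ModuleCat.of A M with hX
  set Hm : ModuleCat A := ModuleCat.of A (A ⧸ Ideal.span {x}) with hHm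
  set F : ModuleCat A ⥤ ModuleCat A := (MonoidalCategory.tensoringLeft (ModuleCat A)).obj Hm
    with hF
  obtain ⟨P⟩ : Nonempty (ProjectiveResolution X) := HasProjectiveResolution.out
  have hzero : Limits.IsZero ((F.leftDerived 1).obj X) := by
    have hss : Subsingleton ((F.leftDerived 1).obj X) := hsub
    exact ModuleCat.isZero_of_subsingleton _
  set K := (F.mapHomologicalComplex (ComplexShape.down ℕ)).obj P.complex with hK
  have hzeroH : Limits.IsZero
      ((HomologicalComplex.homologyFunctor (ModuleCat A) (ComplexShape.down ℕ) 1).obj K) :=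
    Limits.IsZero.of_iso hzero (P.isoLeftDerivedObj F 1).symm
  have hexact : K.ExactAt 1 :=
    (HomologicalComplex.exactAt_iff_isZero_homology K 1).mpr hzeroH
  have hsc := (HomologicalComplex.exactAt_iff' K 2 1 0 (by simp) (by simp)).mp hexact
  rw [ShortComplex.moduleCat_exact_iff] at hsc
  have hsc' : ∀ t : TensorProduct A (A ⧸ Ideal.span {x}) (P.complex.X 1), (K.d 1 0) t = 0 →
      ∃ s : TensorProduct A (A ⧸ Ideal.span {x}) (P.complex.X 2), (K.d 2 1) s = t :=
    fun t h => hsc t h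
  have hex0 := P.exact₀
  rw [ShortComplex.moduleCat_exact_iff] at hex0
  have hex0' : ∀ w0 : P.complex.X 0, P.π.f 0 w0 = 0 →
      ∃ u : P.complex.X 1, P.complex.d 1 0 u = w0 := fun w0 h => hex0 w0 h
  have hepi : Epi (P.π.f 0) := by
    infer_instance
  have hsurj : Function.Surjective (P.π.f 0) := (ModuleCat.epi_iff_surjective _).mp hepi
  obtain ⟨w, hw⟩ := hsurj m
  have hεxw : P.π.f 0 (x • w) = 0 := by
    rw [map_smul, hw]
    exact hm
  obtain ⟨u, hu⟩ := hex0' (x • w) hεxw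
  set one : A ⧸ Ideal.span {x} := Ideal.Quotient.mk (Ideal.span {x}) 1 with hone
  have honex : x • one = 0 := by
    have h1 : x • one = Submodule.Quotient.mk (x • (1 : A)) :=
      (Submodule.Quotient.mk_smul (Ideal.span {x}) x 1).symm
    rw [h1, smul_eq_mul, mul_one]
    exact (Submodule.Quotient.mk_eq_zero _).mpr (Ideal.mem_span_singleton_self x)
  have honesmul : ∀ a : A, a • one = Ideal.Quotient.mk (Ideal.span {x}) a := by
    intro a
    have h1 : a • one = Submodule.Quotient.mk (a • (1 : A)) :=
      (Submodule.Quotient.mk_smul (Ideal.span {x}) a 1).symm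
    rw [h1, smul_eq_mul, mul_one]
    rfl
  have hd10 : ∀ t : P.complex.X 1, (K.d 1 0) (one ⊗ₜ[A] t) = one ⊗ₜ[A] (P.complex.d 1 0 t) := by
    intro t
    exact ModuleCat.MonoidalCategory.whiskerLeft_apply Hm (P.complex.d 1 0) one t
  have hd21 : ∀ t : P.complex.X 2, (K.d 2 1) (one ⊗ₜ[A] t) = one ⊗ₜ[A] (P.complex.d 2 1 t) := by
    intro t
    exact ModuleCat.MonoidalCategory.whiskerLeft_apply Hm (P.complex.d 2 1) one t
  have ht0 : (K.d 1 0) (one ⊗ₜ[A] u) = 0 := by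
    rw [hd10, hu, TensorProduct.tmul_smul, TensorProduct.smul_tmul', honex,
      TensorProduct.zero_tmul]
    rfl
  obtain ⟨s, hsK0⟩ := hsc' (one ⊗ₜ[A] u) ht0
  have hcyc : ∀ t : TensorProduct A (A ⧸ Ideal.span {x}) (P.complex.X 2),
      ∃ v : P.complex.X 2, t = one ⊗ₜ[A] v := by
    intro t
    induction t using TensorProduct.induction_on with
    | zero => exact ⟨0, by rw [TensorProduct.tmul_zero]⟩
    | tmul h v =>
      obtain ⟨a, rfl⟩ := Ideal.Quotient.mk_surjective h
      refine ⟨a • v, ?_⟩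
      rw [TensorProduct.tmul_smul, TensorProduct.smul_tmul', honesmul]
    | add s1 s2 ih1 ih2 =>
      obtain ⟨v1, rfl⟩ := ih1
      obtain ⟨v2, rfl⟩ := ih2
      exact ⟨v1 + v2, by rw [TensorProduct.tmul_add]⟩
  obtain ⟨v, hv⟩ := hcyc s
  have hsK : one ⊗ₜ[A] (P.complex.d 2 1 v) = one ⊗ₜ[A] u := by
    rw [← hd21, ← hv]; exact hsK0
  have hz1 : one ⊗ₜ[A] (u - P.complex.d 2 1 v) = (0 : TensorProduct A (A ⧸ Ideal.span {x}) (P.complex.X 1)) := by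
    rw [TensorProduct.tmul_sub, hsK, sub_self]
  have hmem : (u - P.complex.d 2 1 v) ∈
      (Ideal.span {x} : Ideal A) • (⊤ : Submodule A (P.complex.X 1)) := by
    have h2 := congrArg (TensorProduct.quotTensorEquivQuotSMul (P.complex.X 1) (Ideal.span {x})) hz1
    rw [map_zero, hone, TensorProduct.quotTensorEquivQuotSMul_mk_tmul, one_smul] at h2
    exact (Submodule.Quotient.mk_eq_zero _).mp h2
  rw [Submodule.ideal_span_singleton_smul] at hmem
  have hmem' : (u - P.complex.d 2 1 v) ∈ x • ((⊤ : Submodule A (P.complex.X 1)) : Set _) := by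
    rw [← Submodule.coe_pointwise_smul]
    exact hmem
  obtain ⟨n, -, hn⟩ := Set.mem_smul_set.mp hmem'
  have hP0 : x • (w - P.complex.d 1 0 n) = 0 := by
    have hdd : P.complex.d 1 0 (P.complex.d 2 1 v) = 0 := by
      have := P.complex.d_comp_d 2 1 0
      exact congrArg (fun φ : P.complex.X 2 ⟶ P.complex.X 0 => φ.hom v) this
    have h3 : P.complex.d 1 0 (u - P.complex.d 2 1 v) = x • P.complex.d 1 0 n := by
      rw [← hn, map_smul]
    rw [map_sub, hdd, sub_zero, hu] at h3
    rw [smul_sub, ← h3, sub_self]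
  have hproj : Module.Projective A (P.complex.X 0) := by
    have hp := P.projective 0
    infer_instance
  obtain ⟨p', hp'⟩ := ker_smul_of_projective x y hxy _ hP0
  refine ⟨P.π.f 0 p', ?_⟩
  have hfinal : P.π.f 0 (w - P.complex.d 1 0 n) = m := by
    have hdπ : P.π.f 0 (P.complex.d 1 0 n) = 0 := by
      have := P.complex_d_comp_π_f_zero
      exact congrArg (fun φ : P.complex.X 1 ⟶ ((ChainComplex.single₀ (ModuleCat A)).obj X).X 0 => φ.hom n) this
    rw [map_sub, hdπ, sub_zero, hw]
  rw [← hfinal, hp', map_smul]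
  rfl

end TorExtract

section RingFacts
variable {Q A : Type} [CommRing Q] [CommRing A]

lemma ann_fact (q : Q →+* A) (hq : Function.Surjective q) {ι : Type*} (f : ι → Q) (g : Q)
    (r : ℕ) (hr : 1 ≤ r)
    (hker : RingHom.ker q = Ideal.span (insert (g ^ r) (Set.range f)))
    (hreg : ∀ b : Q, g * b ∈ Ideal.span (Set.range f) → b ∈ Ideal.span (Set.range f)) :
    (q g) ^ r = 0 ∧ ∀ a : A, q g * a = 0 → ∃ b : A, a = (q g) ^ (r - 1) * b := by
  have hJker : Ideal.span (Set.range f) ≤ RingHom.ker q := by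
    rw [hker]
    exact Ideal.span_mono (Set.subset_insert _ _)
  constructor
  · rw [← map_pow, ← RingHom.mem_ker, hker]
    exact Ideal.subset_span (Set.mem_insert _ _)
  · intro a ha
    obtain ⟨b, rfl⟩ := hq a
    have hmem : g * b ∈ RingHom.ker q := by
      rw [RingHom.mem_ker, map_mul, ha]
    rw [hker, Ideal.span_insert] at hmem
    obtain ⟨u, hu, v, hv, huv⟩ := Submodule.mem_sup.mp hmem
    obtain ⟨c, rfl⟩ := Ideal.mem_span_singleton'.mp hu
    have hgb : g * (b - c * g ^ (r - 1)) ∈ Ideal.span (Set.range f) := by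
      have h1 : g * (b - c * g ^ (r - 1)) = g * b - c * g ^ r := by
        have : g ^ r = g ^ (r - 1) * g := by
          rw [← pow_succ]
          congr 1
          omega
        rw [this]
        ring
      rw [h1, ← huv]
      simpa using hv
    have hbmem := hreg _ hgb
    refine ⟨q c, ?_⟩
    have : q (b - c * g ^ (r - 1)) = 0 := hJker hbmem
    rw [map_sub, sub_eq_zero] at this
    rw [this, map_mul, map_pow]
    ring
end RingFacts


theorem stmt_1
    (Q : Type) [CommRing Q] [IsLocalRing Q] [IsNoetherianRing Q]
    [IsAlgClosed (IsLocalRing.ResidueField Q)]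
    (c : ℕ) (hc : 2 ≤ c)
    (hdim : ringKrullDim Q = c)
    (hregular : ∃ s : Finset Q, s.card = c ∧
      Ideal.span (s : Set Q) = IsLocalRing.maximalIdeal Q)
    (f : Fin (c - 1) → Q) (g : Q)
    (hf2 : ∀ i, f i ∈ IsLocalRing.maximalIdeal Q ^ 2)
    (hg : g ∈ IsLocalRing.maximalIdeal Q)
    (hfreg : RingTheory.Sequence.IsRegular Q (List.ofFn f ++ [g]))
    (r : ℕ) (hr : 2 ≤ r)
    (A : Type) [CommRing A]
    (q : Q →+* A) (hq : Function.Surjective q)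
    (hker : RingHom.ker q = Ideal.span (insert (g ^ r) (Set.range f))) :
    ∃ m : ℕ, 2 ≤ m ∧
      ∀ (M : Type) [AddCommGroup M] [Module A M] [Module.Finite A M],
        (∀ i : ℕ, 1 ≤ i →
          Subsingleton
            (((Tor (ModuleCat A) i).obj
              (ModuleCat.of A (A ⧸ Ideal.span {q g}))).obj (ModuleCat.of A M))) →
        (m : ℕ∞) ∣ moduleLength A M := by
  classical
  -- extract that `g` is regular modulo the ideal generated by the `f i`
  have hofList : (Ideal.ofList (List.ofFn f) : Ideal Q) = Ideal.span (Set.range f) := by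
    unfold Ideal.ofList
    congr 1
    ext a
    simp [List.mem_ofFn]
  have hsmultop : (Ideal.ofList (List.ofFn f) • (⊤ : Submodule Q Q) : Submodule Q Q) =
      Ideal.span (Set.range f) := by
    rw [smul_eq_mul, Ideal.mul_top, hofList]
  have hw := hfreg.toIsWeaklyRegular
  rw [RingTheory.Sequence.isWeaklyRegular_append_iff] at hw
  have hgreg := (RingTheory.Sequence.isWeaklyRegular_singleton_iff _ _).mp hw.2
  have hreg : ∀ b : Q, g * b ∈ Ideal.span (Set.range f) → b ∈ Ideal.span (Set.range f) := by
    intro b hb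
    have h0 : g • (Submodule.Quotient.mk b :
        Q ⧸ (Ideal.ofList (List.ofFn f) • (⊤ : Submodule Q Q))) = g • 0 := by
      rw [smul_zero, ← Submodule.Quotient.mk_smul]
      rw [Submodule.Quotient.mk_eq_zero, hsmultop]
      rwa [smul_eq_mul]
    have h1 := hgreg h0
    rw [Submodule.Quotient.mk_eq_zero, hsmultop] at h1
    exact h1
  have hr1 : 1 ≤ r := by omega
  obtain ⟨hx_r, hx_ann⟩ := ann_fact q hq f g r hr1 hker hreg
  refine ⟨r, hr, ?_⟩
  intro M _ _ _ htor
  have hx : ∀ m : M, q g • m = 0 → ∃ m', m = (q g) ^ (r - 1) • m' := fun m hm =>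
    tor_one_vanishing (q g) ((q g) ^ (r - 1)) M hx_ann (htor 1 le_rfl) m hm
  have hnil : ∀ m : M, (q g) ^ r • m = 0 := by
    intro m
    rw [hx_r, zero_smul]
  exact ⟨_, moduleLength_of_pow_filtration (q g) r hr1 hnil hx⟩
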